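/- Fix n ≥ 2 and complex numbers q_{ij} (1 ≤ i, j ≤ n) with q_{ii} = 1, q_{ji} = q_{ij}^{-1} and |q_{ij}| = 1. On the m-particle space ℓ²({1, …, n}^m) (the Hilbert space of complex functions on words of length m, with orthonormal basis {e_x}), define for each permutation σ ∈ S_m the linear operator U^{m,q}_σ by U^{m,q}_σ e_x = q^σ(x) e_{x ∘ σ^{-1}}. Then each U^{m,q}_σ is unitary with (U^{m,q}_σ)^* = U^{m,q}_{σ^{-1}}, and the map σ ↦ U^{m,q}_σ is a group homomorphism: U^{m,q}_{σ_1 σ_2} = U^{m,q}_{σ_1} U^{m,q}_{σ_2} for all σ_1, σ_2 ∈ S_m. -/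

import Mathlib

open scoped BigOperators

/-- `q^σ(x) = ∏ q_{x_{σ⁻¹(k)} x_{σ⁻¹(i)}}`, the product over all pairs `i < k`
with `σ⁻¹(i) > σ⁻¹(k)`. -/
noncomputable def qSigma {n : ℕ} (q : Fin n → Fin n → ℂ) {m : ℕ} (x : Fin m → Fin n)
    (σ : Equiv.Perm (Fin m)) : ℂ :=
  ∏ p ∈ Finset.univ.filter (fun p : Fin m × Fin m => p.1 < p.2 ∧ σ⁻¹ p.2 < σ⁻¹ p.1),
    q (x (σ⁻¹ p.2)) (x (σ⁻¹ p.1))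

noncomputable def Hprod {n : ℕ} (q : Fin n → Fin n → ℂ) {m : ℕ} (σ : Equiv.Perm (Fin m))
    (y : Fin m → Fin n) : ℂ :=
  ∏ p ∈ Finset.univ.filter (fun p : Fin m × Fin m => p.1 < p.2 ∧ σ⁻¹ p.2 < σ⁻¹ p.1),
    q (y p.2) (y p.1)

lemma qSigma_comp {n m : ℕ} (q : Fin n → Fin n → ℂ) (σ : Equiv.Perm (Fin m))
    (y : Fin m → Fin n) : qSigma q (fun i => y (σ i)) σ = Hprod q σ y := by
  unfold qSigma Hprod
  exact Finset.prod_congr rfl fun p hp => by simp [Equiv.apply_symm_apply]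

lemma Hprod_eq_if {n m : ℕ} (q : Fin n → Fin n → ℂ) (σ : Equiv.Perm (Fin m))
    (y : Fin m → Fin n) :
    Hprod q σ y = ∏ p ∈ Finset.univ.filter (fun p : Fin m × Fin m => p.1 < p.2),
      (if σ⁻¹ p.2 < σ⁻¹ p.1 then q (y p.2) (y p.1) else 1) := by
  rw [Hprod, ← Finset.filter_filter, Finset.prod_filter]

lemma Hprod_one {n m : ℕ} (q : Fin n → Fin n → ℂ) (y : Fin m → Fin n) :
    Hprod q 1 y = 1 := by
  unfold Hprod
  refine Finset.prod_eq_one fun p hp => ?_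
  simp only [Finset.mem_filter] at hp
  exact absurd (hp.2.1.trans hp.2.2) (lt_irrefl _)

lemma Hprod_mul {n m : ℕ} (q : Fin n → Fin n → ℂ)
    (hne : ∀ i j, q i j ≠ 0) (hq2 : ∀ i j, q j i = (q i j)⁻¹)
    (σ₁ σ₂ : Equiv.Perm (Fin m)) (y : Fin m → Fin n) :
    Hprod q (σ₁ * σ₂) y = Hprod q σ₁ y * Hprod q σ₂ (fun i => y (σ₁ i)) := by
  rw [Hprod_eq_if, Hprod_eq_if, Hprod_eq_if]
  set S : Finset (Fin m × Fin m) :=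
    Finset.univ.filter (fun p : Fin m × Fin m => p.1 < p.2) with hS
  have hmemS : ∀ p : Fin m × Fin m, p ∈ S ↔ p.1 < p.2 := by
    intro p; simp [hS]
  -- reindex the second product on the RHS
  have h2 : (∏ p ∈ S, if σ₂⁻¹ p.2 < σ₂⁻¹ p.1 then q ((fun i => y (σ₁ i)) p.2) ((fun i => y (σ₁ i)) p.1) else 1)
      = ∏ p ∈ S, (if σ₁⁻¹ p.1 < σ₁⁻¹ p.2 then
          (if σ₂⁻¹ (σ₁⁻¹ p.2) < σ₂⁻¹ (σ₁⁻¹ p.1) then q (y p.2) (y p.1) else 1)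
        else
          (if σ₂⁻¹ (σ₁⁻¹ p.1) < σ₂⁻¹ (σ₁⁻¹ p.2) then q (y p.1) (y p.2) else 1)) := by
    refine Finset.prod_bij'
      (fun p _ => if σ₁ p.1 < σ₁ p.2 then (σ₁ p.1, σ₁ p.2) else (σ₁ p.2, σ₁ p.1))
      (fun p _ => if σ₁⁻¹ p.1 < σ₁⁻¹ p.2 then (σ₁⁻¹ p.1, σ₁⁻¹ p.2) else (σ₁⁻¹ p.2, σ₁⁻¹ p.1))
      ?_ ?_ ?_ ?_ ?_
    · intro p hp
      rw [hmemS] at hp ⊢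
      by_cases h : σ₁ p.1 < σ₁ p.2
      · simpa [h] using h
      · have : σ₁ p.1 ≠ σ₁ p.2 := fun he => (ne_of_lt hp) (σ₁.injective he)
        have h' : σ₁ p.2 < σ₁ p.1 := lt_of_le_of_ne (not_lt.mp h) (Ne.symm this)
        simpa [h] using h'
    · intro p hp
      rw [hmemS] at hp ⊢
      by_cases h : σ₁⁻¹ p.1 < σ₁⁻¹ p.2
      · rw [if_pos h]; exact h
      · have : σ₁⁻¹ p.1 ≠ σ₁⁻¹ p.2 := fun he => (ne_of_lt hp) (σ₁⁻¹.injective he)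
        have h' : σ₁⁻¹ p.2 < σ₁⁻¹ p.1 := lt_of_le_of_ne (not_lt.mp h) (Ne.symm this)
        rw [if_neg h]; exact h'
    · intro p hp
      rw [hmemS] at hp
      by_cases h : σ₁ p.1 < σ₁ p.2 <;> simp [h, Equiv.symm_apply_apply, hp, not_lt_of_gt hp]
    · intro p hp
      rw [hmemS] at hp
      by_cases h : σ₁⁻¹ p.1 < σ₁⁻¹ p.2 <;> rw [Equiv.Perm.inv_def] at h <;> simp [h, Equiv.apply_symm_apply, hp, not_lt_of_gt hp]
    · intro p hp
      rw [hmemS] at hp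
      by_cases h : σ₁ p.1 < σ₁ p.2
      · have h' : ¬ σ₁ p.2 < σ₁ p.1 := not_lt_of_gt h
        simp [h, Equiv.symm_apply_apply, h', hp]
      · have hne' : σ₁ p.1 ≠ σ₁ p.2 := fun he => (ne_of_lt hp) (σ₁.injective he)
        have h' : σ₁ p.2 < σ₁ p.1 := lt_of_le_of_ne (not_lt.mp h) (Ne.symm hne')
        simp [h, Equiv.symm_apply_apply, h', not_lt_of_gt hp]
  rw [h2, ← Finset.prod_mul_distrib]
  refine Finset.prod_congr rfl fun p hp => ?_
  rw [hmemS] at hp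
  have hτ : ∀ j, (σ₁ * σ₂)⁻¹ j = σ₂⁻¹ (σ₁⁻¹ j) := by
    intro j; simp [mul_inv_rev, Equiv.Perm.mul_apply]
  rw [hτ, hτ]
  have hab : σ₁⁻¹ p.1 ≠ σ₁⁻¹ p.2 := fun he => (ne_of_lt hp) (σ₁⁻¹.injective he)
  have hcd : σ₂⁻¹ (σ₁⁻¹ p.1) ≠ σ₂⁻¹ (σ₁⁻¹ p.2) := fun he => hab (σ₂⁻¹.injective he)
  by_cases h : σ₁⁻¹ p.1 < σ₁⁻¹ p.2
  · have h' : ¬ σ₁⁻¹ p.2 < σ₁⁻¹ p.1 := not_lt_of_gt h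
    rw [Equiv.Perm.inv_def] at h h'
    simp [h, h']
  · have h' : σ₁⁻¹ p.2 < σ₁⁻¹ p.1 := lt_of_le_of_ne (not_lt.mp h) (Ne.symm hab)
    by_cases h2c : σ₂⁻¹ (σ₁⁻¹ p.1) < σ₂⁻¹ (σ₁⁻¹ p.2)
    · have h2c' : ¬ σ₂⁻¹ (σ₁⁻¹ p.2) < σ₂⁻¹ (σ₁⁻¹ p.1) := not_lt_of_gt h2c
      simp only [h, h', h2c, h2c', if_true, if_false, ite_true, ite_false]
      rw [hq2 (y p.1) (y p.2)]
      exact (inv_mul_cancel₀ (hne _ _)).symm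
    · have h2c' : σ₂⁻¹ (σ₁⁻¹ p.2) < σ₂⁻¹ (σ₁⁻¹ p.1) :=
        lt_of_le_of_ne (not_lt.mp h2c) (Ne.symm hcd)
      simp only [Equiv.Perm.inv_def] at h h' h2c h2c'
      simp [h, h', h2c, h2c']

lemma Hprod_conj {n m : ℕ} (q : Fin n → Fin n → ℂ)
    (hconj : ∀ i j, (starRingEnd ℂ) (q i j) = q j i)
    (σ : Equiv.Perm (Fin m)) (z : Fin m → Fin n) :
    (starRingEnd ℂ) (Hprod q σ⁻¹ z) = Hprod q σ (fun j => z (σ⁻¹ j)) := by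
  unfold Hprod
  rw [map_prod]
  simp only [inv_inv]
  refine Finset.prod_bij'
    (fun p (_ : p ∈ Finset.univ.filter (fun p : Fin m × Fin m => p.1 < p.2 ∧ σ p.2 < σ p.1))
      => (σ p.2, σ p.1))
    (fun p _ => (σ⁻¹ p.2, σ⁻¹ p.1)) ?_ ?_ ?_ ?_ ?_
  · intro p hp
    simp only [Finset.mem_filter, Finset.mem_univ, true_and] at hp ⊢
    exact ⟨hp.2, by simpa using hp.1⟩
  · intro p hp
    simp only [Finset.mem_filter, Finset.mem_univ, true_and] at hp ⊢
    exact ⟨hp.2, by simpa using hp.1⟩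
  · intro p hp; simp
  · intro p hp; simp
  · intro p hp
    simp [hconj]


/-- The operator `U^{m,q}_σ` on `ℓ²({1,…,n}^m)` with `U^{m,q}_σ e_x = q^σ(x) e_{x ∘ σ⁻¹}`. -/
noncomputable def Uop {n : ℕ} (q : Fin n → Fin n → ℂ) (m : ℕ) (σ : Equiv.Perm (Fin m)) :
    EuclideanSpace ℂ (Fin m → Fin n) →L[ℂ] EuclideanSpace ℂ (Fin m → Fin n) :=
  LinearMap.toContinuousLinearMap
    { toFun := fun f => (WithLp.toLp 2 (fun (y : Fin m → Fin n) =>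
          qSigma q (fun i => y (σ i)) σ * f (fun i => y (σ i))) :
        EuclideanSpace ℂ (Fin m → Fin n))
      map_add' := by
        intro f g
        ext y
        simp [PiLp.add_apply, mul_add]
      map_smul' := by
        intro c f
        ext y
        simp [PiLp.smul_apply, smul_eq_mul]
        ring }


lemma Uop_apply {n : ℕ} (q : Fin n → Fin n → ℂ) {m : ℕ} (σ : Equiv.Perm (Fin m))
    (f : EuclideanSpace ℂ (Fin m → Fin n)) (y : Fin m → Fin n) :
    Uop q m σ f y = Hprod q σ y * f (fun i => y (σ i)) := by
  rw [show Uop q m σ f y = qSigma q (fun i => y (σ i)) σ * f (fun i => y (σ i)) from rfl,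
    qSigma_comp]

lemma Uop_one {n : ℕ} (q : Fin n → Fin n → ℂ) (m : ℕ) : Uop q m 1 = 1 := by
  ext f y
  rw [ContinuousLinearMap.one_apply, Uop_apply, Hprod_one]
  simp

lemma Uop_mul {n : ℕ} (q : Fin n → Fin n → ℂ)
    (hne : ∀ i j, q i j ≠ 0) (hq2 : ∀ i j, q j i = (q i j)⁻¹) (m : ℕ)
    (σ₁ σ₂ : Equiv.Perm (Fin m)) :
    Uop q m (σ₁ * σ₂) = Uop q m σ₁ * Uop q m σ₂ := by
  ext f y
  rw [ContinuousLinearMap.mul_apply, Uop_apply, Uop_apply, Uop_apply,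
    Hprod_mul q hne hq2]
  simp [Equiv.Perm.mul_apply, mul_assoc]

lemma Uop_star {n : ℕ} (q : Fin n → Fin n → ℂ)
    (hconj : ∀ i j, (starRingEnd ℂ) (q i j) = q j i) (m : ℕ) (σ : Equiv.Perm (Fin m)) :
    star (Uop q m σ) = Uop q m σ⁻¹ := by
  rw [ContinuousLinearMap.star_eq_adjoint]
  symm
  rw [ContinuousLinearMap.eq_adjoint_iff]
  intro f g
  simp only [PiLp.inner_apply, RCLike.inner_apply', Uop_apply]
  rw [show (∑ y : Fin m → Fin n, (starRingEnd ℂ) (f y) *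
        (Hprod q σ y * g (fun i => y (σ i))))
      = ∑ z : Fin m → Fin n, (starRingEnd ℂ) (f ((Equiv.arrowCongr σ (Equiv.refl (Fin n))) z)) *
        (Hprod q σ ((Equiv.arrowCongr σ (Equiv.refl (Fin n))) z) *
          g (fun i => ((Equiv.arrowCongr σ (Equiv.refl (Fin n))) z) (σ i)))
      from (Equiv.sum_comp (Equiv.arrowCongr σ (Equiv.refl (Fin n))) _).symm]
  refine Finset.sum_congr rfl fun z _ => ?_
  have hE : ∀ j, (Equiv.arrowCongr σ (Equiv.refl (Fin n))) z j = z (σ⁻¹ j) := fun j => rfl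
  have hE2 : (fun i => ((Equiv.arrowCongr σ (Equiv.refl (Fin n))) z) (σ i)) = z := by
    funext i; rw [hE]; simp
  have hE3 : ((Equiv.arrowCongr σ (Equiv.refl (Fin n))) z : Fin m → Fin n)
      = fun j => z (σ⁻¹ j) := funext hE
  rw [hE2, hE3, map_mul, Hprod_conj q hconj σ z]
  ring


/-- Each `U^{m,q}_σ` is unitary with adjoint `U^{m,q}_{σ⁻¹}`, and `σ ↦ U^{m,q}_σ` is a
group homomorphism. -/
theorem stmt6 {n : ℕ} (hn : 2 ≤ n) (q : Fin n → Fin n → ℂ)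
    (hq1 : ∀ i, q i i = 1) (hq2 : ∀ i j, q j i = (q i j)⁻¹) (hq3 : ∀ i j, ‖q i j‖ = 1)
    (m : ℕ) :
    (∀ σ : Equiv.Perm (Fin m),
        star (Uop q m σ) = Uop q m σ⁻¹ ∧
        Uop q m σ ∈ unitary (EuclideanSpace ℂ (Fin m → Fin n) →L[ℂ]
          EuclideanSpace ℂ (Fin m → Fin n))) ∧
    (∀ σ₁ σ₂ : Equiv.Perm (Fin m), Uop q m (σ₁ * σ₂) = Uop q m σ₁ * Uop q m σ₂) := by
  have hne : ∀ i j, q i j ≠ 0 := by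
    intro i j h
    have := hq3 i j
    rw [h] at this
    simp at this
  have hconj : ∀ i j, (starRingEnd ℂ) (q i j) = q j i := by
    intro i j
    rw [hq2 i j, Complex.inv_eq_conj (hq3 i j)]
  refine ⟨fun σ => ⟨Uop_star q hconj m σ, ?_⟩, fun σ₁ σ₂ => Uop_mul q hne hq2 m σ₁ σ₂⟩
  rw [Unitary.mem_iff, Uop_star q hconj m σ]
  constructor
  · rw [← Uop_mul q hne hq2, inv_mul_cancel, Uop_one]
  · rw [← Uop_mul q hne hq2, mul_inv_cancel, Uop_one]
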